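/- Let η ∈ (0,1), set ν = min(η/2, (1−η)/4), let ς ∈ (0,1], ε_min ∈ (0,1], and κ_r = ς·(1−η)/(4·(1+ν)·ϑ_f). Let j ∈ {1,…,q}, let 0 < r ≤ κ_r·ε_min, and let s ∈ ℝⁿ with ‖s‖ ≤ r. Assume that: (a) Δt̄_j(s) ≥ φ̂·r^j/j! for some real φ̂ > ς·ε_min/(1+ν); (b) |Δt_{f,j}(x,s) − Δt̄_j(s)| ≤ ν·Δt̄_j(s); and (c) |(f(x) − f(x+s)) − Δ̄| ≤ 2ν·Δt̄_j(s), where Δ̄ ∈ ℝ is the inexact function-value decrease. Then Δ̄ ≥ η·Δt̄_j(s), i.e. the trust-region acceptance ratio ρ = Δ̄/Δt̄_j(s) satisfies ρ ≥ η (the iteration is successful). -/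

import Mathlib

open scoped BigOperators

open Finset Set in
private lemma taylor_lip {n : ℕ} (j : ℕ) :
    ∀ {F : Type} [NormedAddCommGroup F] [NormedSpace ℝ F]
      (f : EuclideanSpace ℝ (Fin n) → F), ContDiff ℝ j f → ∀ L : ℝ,
      (∀ x y, ‖iteratedFDeriv ℝ j f x - iteratedFDeriv ℝ j f y‖ ≤ L * ‖x - y‖) →
      ∀ x s : EuclideanSpace ℝ (Fin n),
      ‖f (x + s) - ∑ ℓ ∈ Finset.range (j+1),
          ((Nat.factorial ℓ : ℝ))⁻¹ • iteratedFDeriv ℝ ℓ f x (fun _ => s)‖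
        ≤ L * ‖s‖ ^ (j+1) / (Nat.factorial (j+1) : ℝ) := by
  induction j with
  | zero =>
    intro F _ _ f hf L hlip x s
    have hnorm : ‖iteratedFDeriv ℝ 0 f (x+s) - iteratedFDeriv ℝ 0 f x‖ = ‖f (x+s) - f x‖ := by
      rw [iteratedFDeriv_zero_eq_comp]
      simp only [Function.comp_apply]
      rw [← LinearIsometryEquiv.map_sub, LinearIsometryEquiv.norm_map]
    have h := hlip (x + s) x
    rw [hnorm, add_sub_cancel_left] at h
    simpa [iteratedFDeriv_zero_apply] using h
  | succ j ih =>
    intro F _ _ f hf L hlip x s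
    set g := fderiv ℝ f with hg
    have hfd : Differentiable ℝ f :=
      hf.differentiable (by simp)
    have hg_cd : ContDiff ℝ j g := hf.fderiv_right (by norm_cast)
    have hg_lip : ∀ a b, ‖iteratedFDeriv ℝ j g a - iteratedFDeriv ℝ j g b‖ ≤ L * ‖a - b‖ := by
      intro a b
      have e1 : ‖iteratedFDeriv ℝ j g a - iteratedFDeriv ℝ j g b‖
          = ‖iteratedFDeriv ℝ (j+1) f a - iteratedFDeriv ℝ (j+1) f b‖ := by
        rw [iteratedFDeriv_succ_eq_comp_right (n := j) (x := a),
          iteratedFDeriv_succ_eq_comp_right (n := j) (x := b)]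
        simp only [Function.comp_apply]
        rw [← LinearIsometryEquiv.map_sub, LinearIsometryEquiv.norm_map]
      rw [e1]; exact hlip a b
    have hIH := ih g hg_cd L hg_lip
    -- the curve and auxiliary functions
    set v : ℕ → F := fun ℓ => iteratedFDeriv ℝ ℓ f x (fun _ => s) with hv
    set h : ℝ → F := fun t => f (x + t • s)
      - ∑ ℓ ∈ Finset.range (j+2), (t^ℓ * ((Nat.factorial ℓ : ℝ))⁻¹) • v ℓ with hh
    have hkey : ∀ m : ℕ, (iteratedFDeriv ℝ m g x (fun _ => s)) s = v (m+1) := by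
      intro m
      show _ = iteratedFDeriv ℝ (m+1) f x (fun _ => s)
      rw [iteratedFDeriv_succ_apply_right]
      rfl
    have hderiv : ∀ t : ℝ, HasDerivAt h
        ((g (x + t • s) - ∑ m ∈ Finset.range (j+1),
          ((Nat.factorial m : ℝ))⁻¹ • iteratedFDeriv ℝ m g x (fun _ => t • s)) s) t := by
      intro t
      have hc : HasDerivAt (fun t : ℝ => x + t • s) s t := by
        simpa using ((hasDerivAt_id t).smul_const s).const_add x
      have h1 : HasDerivAt (fun t : ℝ => f (x + t • s)) (g (x + t • s) s) t :=
        (hfd (x + t • s)).hasFDerivAt.comp_hasDerivAt t hc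
      have h2 : HasDerivAt (fun t : ℝ => ∑ ℓ ∈ Finset.range (j+2),
          (t^ℓ * ((Nat.factorial ℓ : ℝ))⁻¹) • v ℓ)
          (∑ ℓ ∈ Finset.range (j+2), ((ℓ : ℝ) * t^(ℓ-1) * ((Nat.factorial ℓ : ℝ))⁻¹) • v ℓ) t := by
        refine HasDerivAt.fun_sum fun ℓ _ => ?_
        exact ((hasDerivAt_pow ℓ t).mul_const _).smul_const _
      have h3 := h1.sub h2
      convert h3 using 1
      · rfl
      have hsum2 : ∑ ℓ ∈ Finset.range (j+2), ((ℓ : ℝ) * t^(ℓ-1) * ((Nat.factorial ℓ : ℝ))⁻¹) • v ℓ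
          = ∑ m ∈ Finset.range (j+1), (t^m * ((Nat.factorial m : ℝ))⁻¹) • v (m+1) := by
        rw [Finset.sum_range_succ']
        simp only [Nat.cast_zero, zero_mul, zero_smul, add_zero]
        refine Finset.sum_congr rfl fun m _ => ?_
        congr 1
        rw [Nat.add_sub_cancel, Nat.factorial_succ]
        push_cast
        have : (Nat.factorial m : ℝ) ≠ 0 := Nat.cast_ne_zero.mpr (Nat.factorial_ne_zero m)
        field_simp
      rw [ContinuousLinearMap.sub_apply, ContinuousLinearMap.sum_apply, hsum2]
      congr 1
      refine Finset.sum_congr rfl fun m _ => ?_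
      rw [ContinuousLinearMap.smul_apply]
      have hms : iteratedFDeriv ℝ m g x (fun _ => t • s)
          = t^m • iteratedFDeriv ℝ m g x (fun _ => s) := by
        have := (iteratedFDeriv ℝ m g x).map_smul_univ (fun _ => t) (fun _ => s)
        simpa [Finset.prod_const] using this
      rw [hms, ContinuousLinearMap.smul_apply, hkey m, smul_smul, mul_comm]
    -- bound the derivative on [0,1]
    have hbound : ∀ t ∈ Ico (0:ℝ) 1, ‖(g (x + t • s) - ∑ m ∈ Finset.range (j+1),
          ((Nat.factorial m : ℝ))⁻¹ • iteratedFDeriv ℝ m g x (fun _ => t • s)) s‖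
        ≤ (L * ‖s‖ ^ (j + 2) / (Nat.factorial (j+1) : ℝ)) * t ^ (j+1) := by
      intro t ht
      have h0 : ‖(g (x + t • s) - ∑ m ∈ Finset.range (j+1),
          ((Nat.factorial m : ℝ))⁻¹ • iteratedFDeriv ℝ m g x (fun _ => t • s)) s‖
          ≤ ‖g (x + t • s) - ∑ m ∈ Finset.range (j+1),
          ((Nat.factorial m : ℝ))⁻¹ • iteratedFDeriv ℝ m g x (fun _ => t • s)‖ * ‖s‖ :=
        ContinuousLinearMap.le_opNorm _ s
      have h1 := hIH x (t • s)
      have hts : ‖t • s‖ = t * ‖s‖ := by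
        rw [norm_smul, Real.norm_eq_abs, abs_of_nonneg ht.1]
      rw [hts] at h1
      calc _ ≤ ‖g (x + t • s) - ∑ m ∈ Finset.range (j+1),
            ((Nat.factorial m : ℝ))⁻¹ • iteratedFDeriv ℝ m g x (fun _ => t • s)‖ * ‖s‖ := h0
        _ ≤ (L * (t * ‖s‖) ^ (j+1) / (Nat.factorial (j+1) : ℝ)) * ‖s‖ :=
            mul_le_mul_of_nonneg_right h1 (norm_nonneg s)
        _ = (L * ‖s‖ ^ (j + 2) / (Nat.factorial (j+1) : ℝ)) * t ^ (j+1) := by ring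
    -- fencing
    have hB : ∀ t : ℝ, HasDerivAt (fun t : ℝ =>
        (L * ‖s‖ ^ (j + 2) / (Nat.factorial (j+1) : ℝ)) * t ^ (j+2) / ((j:ℝ)+2))
        ((L * ‖s‖ ^ (j + 2) / (Nat.factorial (j+1) : ℝ)) * t ^ (j+1)) t := by
      intro t
      have := ((hasDerivAt_pow (j+2) t).const_mul
        (L * ‖s‖ ^ (j + 2) / (Nat.factorial (j+1) : ℝ))).div_const ((j:ℝ)+2)
      convert this using 1
      · rfl
      · rfl
      have : ((j:ℝ)+2) ≠ 0 := by positivity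
      push_cast
      field_simp
    have hcont : ContinuousOn h (Icc (0:ℝ) 1) := by
      apply ContinuousOn.sub
      · exact (hf.continuous.comp
          (continuous_const.add (continuous_id.smul continuous_const))).continuousOn
      · exact (continuous_finset_sum _ fun ℓ _ =>
          (((continuous_pow ℓ).mul continuous_const).smul continuous_const)).continuousOn
    have h0 : ‖h 0‖ ≤ (L * ‖s‖ ^ (j + 2) / (Nat.factorial (j+1) : ℝ)) * (0:ℝ) ^ (j+2) / ((j:ℝ)+2) := by
      have hz : h 0 = 0 := by
        show f (x + (0:ℝ) • s)
          - ∑ ℓ ∈ Finset.range (j+2), ((0:ℝ)^ℓ * ((Nat.factorial ℓ : ℝ))⁻¹) • v ℓ = 0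
        rw [Finset.sum_range_succ']
        have hterm : ∀ m ∈ Finset.range (j+1),
            ((0:ℝ)^(m+1) * ((Nat.factorial (m+1) : ℝ))⁻¹) • v (m+1) = 0 := by
          intro m _
          simp [zero_pow]
        rw [Finset.sum_congr rfl hterm, Finset.sum_const_zero, zero_add]
        have hv0 : v 0 = f x := by
          show iteratedFDeriv ℝ 0 f x (fun _ => s) = f x
          rw [iteratedFDeriv_zero_apply]
        simp [hv0]
      rw [hz]
      simp [zero_pow]
    have hmain := image_norm_le_of_norm_deriv_right_le_deriv_boundary hcont
      (fun t _ => (hderiv t).hasDerivWithinAt) h0 hB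
      (fun t ht => hbound t ht) (right_mem_Icc.mpr zero_le_one)
    have hfin : h 1 = f (x + s) - ∑ ℓ ∈ Finset.range (j+2),
        ((Nat.factorial ℓ : ℝ))⁻¹ • v ℓ := by
      rw [hh]
      simp only [one_smul, one_pow, one_mul]
    rw [hfin] at hmain
    have hmain' : ‖f (x + s) - ∑ ℓ ∈ Finset.range (j+2),
        ((Nat.factorial ℓ : ℝ))⁻¹ • iteratedFDeriv ℝ ℓ f x (fun _ => s)‖
        ≤ (L * ‖s‖ ^ (j + 2) / (Nat.factorial (j+1) : ℝ)) * (1:ℝ) ^ (j+2) / ((j:ℝ)+2) := by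
      simpa only [hv] using hmain
    have hfac : (Nat.factorial (j+1+1) : ℝ) = ((j:ℝ)+2) * (Nat.factorial (j+1) : ℝ) := by
      rw [Nat.factorial_succ]
      push_cast
      ring
    have heq : (L * ‖s‖ ^ (j + 2) / (Nat.factorial (j+1) : ℝ)) * (1:ℝ) ^ (j+2) / ((j:ℝ)+2)
        = L * ‖s‖ ^ (j+1+1) / (Nat.factorial (j+1+1) : ℝ) := by
      rw [one_pow, mul_one, div_div, hfac]
      ring_nf
    rw [heq] at hmain'
    exact hmain'

/-- The inexact Taylor decrement `Δt̄_j(s) = -∑_{ℓ=1}^j (1/ℓ!) T̄_ℓ[s,…,s]`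
built from a family of continuous `ℓ`-multilinear forms `T̄ ℓ` on `ℝⁿ`. -/
noncomputable def taylorDecrement {n : ℕ}
    (T : ∀ ℓ : ℕ, ContinuousMultilinearMap ℝ (fun _ : Fin ℓ => EuclideanSpace ℝ (Fin n)) ℝ)
    (j : ℕ) (d : EuclideanSpace ℝ (Fin n)) : ℝ :=
  -∑ ℓ ∈ Finset.Icc 1 j, (1 / (Nat.factorial ℓ : ℝ)) * T ℓ (fun _ => d)

/-- Lemma 3.2 of the paper: under the accuracy events and a sufficiently small
trust-region radius `r ≤ κ_r·ε_min`, the iteration is successful, i.e. the inexact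
function decrease `Δ̄` satisfies `Δ̄ ≥ η·Δt̄_j(s)`. -/
theorem successful_iteration_of_small_radius
    (n q : ℕ) (hn : 1 ≤ n) (hq : 1 ≤ q)
    (f : EuclideanSpace ℝ (Fin n) → ℝ) (hf : ContDiff ℝ q f)
    (ϑf : ℝ) (hϑf : 1 ≤ ϑf)
    (hlip : ∀ j ∈ Finset.Icc 1 q, ∀ x y : EuclideanSpace ℝ (Fin n),
      ‖iteratedFDeriv ℝ j f x - iteratedFDeriv ℝ j f y‖ ≤ ϑf * ‖x - y‖)
    (Tb : ∀ ℓ : ℕ, ContinuousMultilinearMap ℝ (fun _ : Fin ℓ => EuclideanSpace ℝ (Fin n)) ℝ)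
    (η ν ς εmin κr : ℝ)
    (hη : 0 < η) (hη1 : η < 1)
    (hν : ν = min (η / 2) ((1 - η) / 4))
    (hς : 0 < ς) (hς1 : ς ≤ 1) (hεmin : 0 < εmin) (hεmin1 : εmin ≤ 1)
    (hκr : κr = ς * (1 - η) / (4 * (1 + ν) * ϑf))
    (j : ℕ) (hj : j ∈ Finset.Icc 1 q)
    (x s : EuclideanSpace ℝ (Fin n)) (r : ℝ)
    (hr0 : 0 < r) (hrκ : r ≤ κr * εmin) (hs : ‖s‖ ≤ r)
    (φhat : ℝ) (hφhat : φhat > ς * εmin / (1 + ν))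
    (ha : taylorDecrement Tb j s ≥ φhat * r ^ j / (Nat.factorial j : ℝ))
    (Δexact : ℝ)
    (hΔexact : Δexact =
      -∑ ℓ ∈ Finset.Icc 1 j,
        (1 / (Nat.factorial ℓ : ℝ)) * iteratedFDeriv ℝ ℓ f x (fun _ => s))
    (hb : |Δexact - taylorDecrement Tb j s| ≤ ν * taylorDecrement Tb j s)
    (Δbar : ℝ)
    (hc : |(f x - f (x + s)) - Δbar| ≤ 2 * ν * taylorDecrement Tb j s) :
    Δbar ≥ η * taylorDecrement Tb j s := by
  obtain ⟨hj1, hjq⟩ := Finset.mem_Icc.mp hj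
  set D := taylorDecrement Tb j s with hD
  have hν0 : 0 < ν := by
    rw [hν]
    exact lt_min (by linarith) (by linarith)
  have hν4 : ν ≤ (1 - η) / 4 := by rw [hν]; exact min_le_right _ _
  have hϑ0 : (0:ℝ) < ϑf := lt_of_lt_of_le one_pos hϑf
  have h1ν : (0:ℝ) < 1 + ν := by linarith
  have h4p : (0:ℝ) < 4 * (1 + ν) := by linarith
  have hjfac : (0:ℝ) < (Nat.factorial j : ℝ) := Nat.cast_pos.mpr (Nat.factorial_pos j)
  have hj1pos : (0:ℝ) < (j:ℝ) + 1 := by positivity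
  have hφ0 : 0 < φhat := lt_trans (div_pos (mul_pos hς hεmin) h1ν) hφhat
  have hD0 : 0 < D :=
    lt_of_lt_of_le (div_pos (mul_pos hφ0 (pow_pos hr0 j)) hjfac) ha
  -- lower bound on D
  have hDlow : ς * εmin / (1 + ν) * (r ^ j / (Nat.factorial j : ℝ)) ≤ D := by
    have h1 : ς * εmin / (1 + ν) * (r ^ j / (Nat.factorial j : ℝ))
        ≤ φhat * (r ^ j / (Nat.factorial j : ℝ)) :=
      mul_le_mul_of_nonneg_right hφhat.le (by positivity)
    have h2 : φhat * (r ^ j / (Nat.factorial j : ℝ))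
        = φhat * r ^ j / (Nat.factorial j : ℝ) := by ring
    linarith [ha]
  -- Taylor bound with Lipschitz derivative
  have hcd : ContDiff ℝ j f := hf.of_le (by exact_mod_cast hjq)
  have htay := taylor_lip j f hcd ϑf (hlip j hj) x s
  have hsum : ∑ ℓ ∈ Finset.range (j+1),
      ((Nat.factorial ℓ : ℝ))⁻¹ • iteratedFDeriv ℝ ℓ f x (fun _ => s)
      = f x - Δexact := by
    have hins : Finset.range (j+1) = insert 0 (Finset.Icc 1 j) := by
      ext k
      simp only [Finset.mem_range, Finset.mem_insert, Finset.mem_Icc]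
      omega
    rw [hins, Finset.sum_insert (by simp), hΔexact, sub_neg_eq_add]
    congr 1
    · simp [iteratedFDeriv_zero_apply]
    · exact Finset.sum_congr rfl fun ℓ _ => by rw [smul_eq_mul, one_div]
  rw [hsum] at htay
  have hfacs : (Nat.factorial (j+1) : ℝ) = ((j:ℝ)+1) * (Nat.factorial j : ℝ) := by
    rw [Nat.factorial_succ]; push_cast; ring
  have hE : |f (x + s) - (f x - Δexact)| ≤ ϑf * r ^ (j+1) / (Nat.factorial (j+1) : ℝ) := by
    rw [← Real.norm_eq_abs]
    refine htay.trans ?_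
    gcongr
    all_goals first
      | exact hϑ0.le
      | exact norm_nonneg s
      | exact hs
  -- the key smallness estimate
  have hr4 : r * (4 * (1 + ν) * ϑf) ≤ ς * (1 - η) * εmin := by
    have hκe : κr * εmin = ς * (1 - η) * εmin / (4 * (1 + ν) * ϑf) := by
      rw [hκr]; ring
    rw [hκe] at hrκ
    exact (le_div_iff₀ (by positivity)).mp hrκ
  have hpos : 0 ≤ ς * (1 - η) * εmin * (j:ℝ) := by
    have : (0:ℝ) ≤ 1 - η := by linarith
    have := mul_nonneg (mul_nonneg hς.le this) hεmin.le
    exact mul_nonneg this (Nat.cast_nonneg j)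
  have hnum : ϑf * r * (4 * (1 + ν)) ≤ ς * (1 - η) * εmin * ((j:ℝ)+1) := by
    nlinarith [hr4, hpos]
  have hcoef : ϑf * r ≤ ς * (1 - η) * εmin * ((j:ℝ)+1) / (4 * (1 + ν)) :=
    (le_div_iff₀ h4p).mpr hnum
  have ha0 : (0:ℝ) ≤ r ^ j / (Nat.factorial j : ℝ) := by positivity
  have hjne : ((j:ℝ)+1) ≠ 0 := ne_of_gt hj1pos
  have hfne : (Nat.factorial j : ℝ) ≠ 0 := ne_of_gt hjfac
  have hνne : (1+ν : ℝ) ≠ 0 := ne_of_gt h1ν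
  have hkeyE : ϑf * r ^ (j+1) / (Nat.factorial (j+1) : ℝ) ≤ (1 - η) / 4 * D := by
    calc ϑf * r ^ (j+1) / (Nat.factorial (j+1) : ℝ)
        = (ϑf * r) * (r ^ j / (Nat.factorial j : ℝ)) / ((j:ℝ)+1) := by
          rw [hfacs, pow_succ]; field_simp
      _ ≤ (ς * (1 - η) * εmin * ((j:ℝ)+1) / (4 * (1 + ν)))
            * (r ^ j / (Nat.factorial j : ℝ)) / ((j:ℝ)+1) :=
          (div_le_div_iff_of_pos_right hj1pos).mpr (mul_le_mul_of_nonneg_right hcoef ha0)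
      _ = (1 - η) / 4 * (ς * εmin / (1 + ν) * (r ^ j / (Nat.factorial j : ℝ))) := by
          field_simp
      _ ≤ (1 - η) / 4 * D :=
          mul_le_mul_of_nonneg_left hDlow (by linarith)
  -- assemble
  have hb1 := (abs_le.mp hb).1
  have hc1 := (abs_le.mp hc).2
  have hE1 := (abs_le.mp hE).2
  have hco : (0:ℝ) ≤ 1 - η - 3*ν - (1 - η)/4 := by linarith
  have hfinpos := mul_nonneg hco hD0.le
  linarith
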